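/- Let u₀ ≥ 0 be integrable with ∫ u₀ = 1 and supp u₀ ⊆ [−M, M]. Define u(t,x) = (4πt)^{−1/2} (∫_ℝ e^{−(x−t²−y)²/(4t)} e^{t y} u₀(y) dy)/(∫_ℝ e^{t y} u₀(y) dy). Then for all t ≥ 1 and all x ∈ ℝ, |u(t,x) − (4πt)^{−1/2} e^{−(x−t²)²/(4t)}| ≤ C M / t for some absolute constant C (one may take C = sup_{z} |z e^{−z²}|/√(4π) times an absolute factor). -/

import Mathlib

open Real MeasureTheory Set

private lemma gauss_lip (p q : ℝ) : |Real.exp (-p ^ 2) - Real.exp (-q ^ 2)| ≤ |p - q| := by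
  have hderiv : ∀ z : ℝ, HasDerivAt (fun z : ℝ => Real.exp (-z ^ 2))
      (Real.exp (-z ^ 2) * -(2 * z ^ 1)) z := fun z =>
    (((hasDerivAt_pow 2 z).neg).exp)
  have hbound : ∀ z : ℝ, ‖Real.exp (-z ^ 2) * -(2 * z ^ 1)‖ ≤ 1 := by
    intro z
    have h1 : 2 * |z| ≤ Real.exp (z ^ 2) := by
      have := Real.add_one_le_exp (z ^ 2)
      nlinarith [sq_nonneg (|z| - 1), sq_abs z, abs_nonneg z]
    have h2 : Real.exp (-z ^ 2) = (Real.exp (z ^ 2))⁻¹ := by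
      rw [← Real.exp_neg]
    rw [norm_mul, norm_neg]
    have hepos : 0 < Real.exp (z ^ 2) := Real.exp_pos _
    calc ‖Real.exp (-z ^ 2)‖ * ‖2 * z ^ 1‖ = Real.exp (-z ^ 2) * (2 * |z|) := by
          rw [Real.norm_eq_abs, abs_of_pos (Real.exp_pos _), Real.norm_eq_abs]
          rw [abs_mul]
          norm_num
      _ ≤ Real.exp (-z ^ 2) * Real.exp (z ^ 2) := by
          exact mul_le_mul_of_nonneg_left h1 (Real.exp_pos _).le
      _ = 1 := by rw [← Real.exp_add]; simp
  have := Convex.norm_image_sub_le_of_norm_hasDerivWithin_le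
    (f := fun z : ℝ => Real.exp (-z ^ 2)) (f' := fun z => Real.exp (-z ^ 2) * -(2 * z ^ 1))
    (fun z _ => (hderiv z).hasDerivWithinAt) (fun z _ => hbound z)
    convex_univ (Set.mem_univ q) (Set.mem_univ p)
  simpa [Real.norm_eq_abs] using this

theorem long_time_compact_support :
    ∃ C > 0, ∀ (M : ℝ) (u₀ : ℝ → ℝ), 0 < M →
      (∀ y, 0 ≤ u₀ y) → Integrable u₀ → (∫ y : ℝ, u₀ y) = 1 →
      Function.support u₀ ⊆ Set.Icc (-M) M →
      ∀ t ≥ (1:ℝ), ∀ x : ℝ,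
        |(Real.sqrt (4 * Real.pi * t))⁻¹ *
            (∫ y : ℝ, Real.exp (-(x - t ^ 2 - y) ^ 2 / (4 * t)) *
              Real.exp (t * y) * u₀ y) /
            (∫ y : ℝ, Real.exp (t * y) * u₀ y)
          - (Real.sqrt (4 * Real.pi * t))⁻¹ * Real.exp (-(x - t ^ 2) ^ 2 / (4 * t))|
          ≤ C * M / t := by
  refine ⟨1, one_pos, ?_⟩
  intro M u₀ hM hpos hu₀ hint hsupp t ht x
  have ht0 : (0:ℝ) < t := lt_of_lt_of_le one_pos ht
  have hst : (0:ℝ) < Real.sqrt t := Real.sqrt_pos.mpr ht0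
  set w : ℝ → ℝ := fun y => Real.exp (t * y) * u₀ y with hw
  set g : ℝ → ℝ := fun y => Real.exp (-(x - t ^ 2 - y) ^ 2 / (4 * t)) with hg
  set h : ℝ := Real.exp (-(x - t ^ 2) ^ 2 / (4 * t)) with hh
  set S : ℝ := Real.sqrt (4 * Real.pi * t) with hS
  have hSpos : 0 < S :=
    Real.sqrt_pos.mpr (by positivity)
  -- support facts
  have hyM : ∀ y, u₀ y ≠ 0 → -M ≤ y ∧ y ≤ M := fun y hy => by
    have := hsupp hy; exact ⟨this.1, this.2⟩
  have hwnn : ∀ y, 0 ≤ w y := fun y => mul_nonneg (Real.exp_pos _).le (hpos y)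
  -- w integrable
  have hmeasw : AEStronglyMeasurable w volume :=
    ((Real.continuous_exp.comp (continuous_const.mul continuous_id)).aestronglyMeasurable).mul
      hu₀.1
  have hwbound : ∀ y, ‖w y‖ ≤ Real.exp (t * M) * u₀ y := by
    intro y
    rw [Real.norm_eq_abs, abs_of_nonneg (hwnn y)]
    rcases eq_or_ne (u₀ y) 0 with h0 | h0
    · simp [hw, h0]
    · exact mul_le_mul_of_nonneg_right
        (Real.exp_le_exp.mpr (mul_le_mul_of_nonneg_left (hyM y h0).2 ht0.le)) (hpos y)
  have hIw : Integrable w := (hu₀.const_mul _).mono' hmeasw (Filter.Eventually.of_forall hwbound)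
  -- g*w integrable
  have hg1 : ∀ y, g y ≤ 1 := fun y =>
    Real.exp_le_one_iff.mpr (div_nonpos_of_nonpos_of_nonneg (neg_nonpos.mpr (sq_nonneg _))
      (by positivity))
  have hgnn : ∀ y, 0 ≤ g y := fun y => (Real.exp_pos _).le
  have hIgw : Integrable (fun y => g y * w y) := by
    refine (hu₀.const_mul (Real.exp (t * M))).mono'
      (((Real.continuous_exp.comp (by continuity)).aestronglyMeasurable).mul hmeasw)
      (Filter.Eventually.of_forall fun y => ?_)
    rw [Real.norm_eq_abs, abs_of_nonneg (mul_nonneg (hgnn y) (hwnn y))]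
    calc g y * w y ≤ 1 * w y := mul_le_mul_of_nonneg_right (hg1 y) (hwnn y)
      _ = w y := one_mul _
      _ ≤ Real.exp (t * M) * u₀ y := by
          have := hwbound y; rwa [Real.norm_eq_abs, abs_of_nonneg (hwnn y)] at this
  set D : ℝ := ∫ y, w y with hD
  set N : ℝ := ∫ y, g y * w y with hN
  -- D > 0
  have hDpos : 0 < D := by
    have hle : ∀ y, Real.exp (-(t * M)) * u₀ y ≤ w y := by
      intro y
      rcases eq_or_ne (u₀ y) 0 with h0 | h0
      · simp [hw, h0]
      · exact mul_le_mul_of_nonneg_right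
          (Real.exp_le_exp.mpr (by nlinarith [(hyM y h0).1])) (hpos y)
    have : Real.exp (-(t * M)) * 1 ≤ D := by
      rw [← hint, ← integral_const_mul]
      exact integral_mono (hu₀.const_mul _) hIw hle
    linarith [Real.exp_pos (-(t * M))]
  -- key pointwise bound
  have hkey : ∀ y, ‖g y * w y - h * w y‖ ≤ M / (2 * Real.sqrt t) * w y := by
    intro y
    rcases eq_or_ne (u₀ y) 0 with h0 | h0
    · simp [hw, h0]
    · have hyabs : |y| ≤ M := abs_le.mpr ⟨(hyM y h0).1, (hyM y h0).2⟩
      have hsq : ∀ A : ℝ, -A ^ 2 / (4 * t) = -(A / (2 * Real.sqrt t)) ^ 2 := by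
        intro A
        rw [div_pow, mul_pow, Real.sq_sqrt ht0.le]
        norm_num
        ring
      have hlip : |g y - h| ≤ |y| / (2 * Real.sqrt t) := by
        have := gauss_lip ((x - t ^ 2 - y) / (2 * Real.sqrt t)) ((x - t ^ 2) / (2 * Real.sqrt t))
        rw [hg, hh]
        simp only [hsq]
        calc _ ≤ |(x - t ^ 2 - y) / (2 * Real.sqrt t) - (x - t ^ 2) / (2 * Real.sqrt t)| := this
          _ = |y| / (2 * Real.sqrt t) := by
              rw [div_sub_div_same, show x - t ^ 2 - y - (x - t ^ 2) = -y by ring,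
                abs_div, abs_neg, abs_of_pos (by positivity : (0:ℝ) < 2 * Real.sqrt t)]
      calc ‖g y * w y - h * w y‖ = |g y - h| * w y := by
            rw [← sub_mul, Real.norm_eq_abs, abs_mul, abs_of_nonneg (hwnn y)]
        _ ≤ |y| / (2 * Real.sqrt t) * w y :=
            mul_le_mul_of_nonneg_right hlip (hwnn y)
        _ ≤ M / (2 * Real.sqrt t) * w y := by
            apply mul_le_mul_of_nonneg_right _ (hwnn y)
            exact div_le_div_of_nonneg_right hyabs (by positivity) |>.trans_eq rfl
  -- numerator bound
  have hnum : |N - h * D| ≤ M / (2 * Real.sqrt t) * D := by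
    have heq : N - h * D = ∫ y, (g y * w y - h * w y) := by
      rw [hN, hD, integral_sub hIgw (hIw.const_mul h), integral_const_mul]
    rw [heq, ← Real.norm_eq_abs]
    calc ‖∫ y, (g y * w y - h * w y)‖ ≤ ∫ y, M / (2 * Real.sqrt t) * w y :=
          norm_integral_le_of_norm_le (hIw.const_mul _) (Filter.Eventually.of_forall hkey)
      _ = M / (2 * Real.sqrt t) * D := by rw [integral_const_mul]
  -- assemble
  have hfrac : |N / D - h| ≤ M / (2 * Real.sqrt t) := by
    have : N / D - h = (N - h * D) / D := by field_simp
    rw [this, abs_div, abs_of_pos hDpos]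
    exact (div_le_iff₀ hDpos).mpr hnum
  have hmain : |S⁻¹ * N / D - S⁻¹ * h| ≤ S⁻¹ * (M / (2 * Real.sqrt t)) := by
    have : S⁻¹ * N / D - S⁻¹ * h = S⁻¹ * (N / D - h) := by ring
    rw [this, abs_mul, abs_of_nonneg (inv_nonneg.mpr hSpos.le)]
    exact mul_le_mul_of_nonneg_left hfrac (inv_nonneg.mpr hSpos.le)
  rw [show (∫ y : ℝ, Real.exp (-(x - t ^ 2 - y) ^ 2 / (4 * t)) * Real.exp (t * y) * u₀ y) = N
    from by simp only [hN, hg, hw, mul_assoc]]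
  refine hmain.trans ?_
  have hSt : Real.sqrt t ≤ S := by
    apply Real.sqrt_le_sqrt
    nlinarith [Real.pi_gt_three]
  have hSinv : S⁻¹ ≤ (Real.sqrt t)⁻¹ := by
    exact inv_anti₀ hst hSt
  calc S⁻¹ * (M / (2 * Real.sqrt t)) ≤ (Real.sqrt t)⁻¹ * (M / (2 * Real.sqrt t)) :=
        mul_le_mul_of_nonneg_right hSinv (by positivity)
    _ = M / (2 * t) := by
        have h2 : (2:ℝ) * t = (2 * Real.sqrt t) * Real.sqrt t := by
          rw [mul_assoc, Real.mul_self_sqrt ht0.le]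
        rw [h2]
        have hne := hst.ne'
        field_simp
    _ ≤ 1 * M / t := by
        rw [one_mul, div_le_div_iff₀ (by positivity) ht0]
        nlinarith
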